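/- In the ring of formal power series R[[y₁,y₂]] over a commutative ring R equipped with a formal group law F with inverse χ, the operator A defined by A(f) = f/F(y₁,χ(y₂)) + σ(f)/F(y₂,χ(y₁)), where σ swaps y₁ and y₂, is well-defined: for every f ∈ R[[y₁,y₂]], the element (1+σ)(f/F(y₁,χ(y₂))) is a genuine power series (the apparent poles cancel). Moreover for any symmetric g and any f, A(g·f) = g·A(f). -/

import Mathlib

open MvPowerSeries

noncomputable def substPS {R : Type*} [CommRing R] {σ : Type*} (F : MvPowerSeries (Fin 2) R)
    (g h : MvPowerSeries σ R) : MvPowerSeries σ R :=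
  fun d => ∑ i ∈ Finset.range (d.sum (fun _ k => k) + 1),
    ∑ j ∈ Finset.range (d.sum (fun _ k => k) + 1),
      (MvPowerSeries.coeff (Finsupp.single 0 i + Finsupp.single 1 j) F) *
        MvPowerSeries.coeff d (g ^ i * h ^ j)

/-- The swap of the two variables of a power series in two variables. -/
noncomputable def swapPS {R : Type*} [CommRing R] (f : MvPowerSeries (Fin 2) R) :
    MvPowerSeries (Fin 2) R :=
  fun d => f (Finsupp.equivMapDomain (Equiv.swap 0 1) d)

/-- Embed a one-variable power series as a series in the second of two variables. -/
noncomputable def toSecond {R : Type*} [CommRing R] (f : PowerSeries R) :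
    MvPowerSeries (Fin 2) R :=
  fun d => if d = Finsupp.single 1 (d 1) then PowerSeries.coeff (d 1) f else 0

structure FormalGroupLaw (R : Type*) [CommRing R] where
  F : MvPowerSeries (Fin 2) R
  F_x_zero : substPS F (PowerSeries.X : PowerSeries R) 0 = PowerSeries.X
  F_zero_y : substPS F (0 : PowerSeries R) (PowerSeries.X : PowerSeries R) = PowerSeries.X
  comm : swapPS F = F
  assoc : substPS F (substPS F (MvPowerSeries.X 0) (MvPowerSeries.X 1) : MvPowerSeries (Fin 3) R)
      (MvPowerSeries.X 2) =
    substPS F (MvPowerSeries.X 0) (substPS F (MvPowerSeries.X 1) (MvPowerSeries.X 2))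

namespace OpA

/-- The exponent `(a, b)` as a `Finsupp` on `Fin 2`. -/
noncomputable def mm (a b : ℕ) : Fin 2 →₀ ℕ := Finsupp.single 0 a + Finsupp.single 1 b

lemma mm_def (a b : ℕ) : Finsupp.single (0 : Fin 2) a + Finsupp.single 1 b = mm a b := rfl

lemma mm_apply0 (a b : ℕ) : mm a b 0 = a := by simp [mm]
lemma mm_apply1 (a b : ℕ) : mm a b 1 = b := by simp [mm, Finsupp.single_apply]

lemma eq_mm (d : Fin 2 →₀ ℕ) : d = mm (d 0) (d 1) := by
  ext i
  fin_cases i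
  · simp [mm_apply0]
  · simp [mm_apply1]

lemma mm_add (a b c d : ℕ) : mm a b + mm c d = mm (a + c) (b + d) := by
  ext i; fin_cases i <;> simp [mm, Finsupp.single_apply]

lemma mm_sum (a b : ℕ) : ((mm a b).sum fun _ k => k) = a + b := by
  rw [Finsupp.sum_fintype]
  · rw [Fin.sum_univ_two, mm_apply0, mm_apply1]
  · intro i; rfl

lemma single_unit_sum (n : ℕ) : ((Finsupp.single () n).sum fun _ k => k) = n :=
  Finsupp.sum_single_index rfl

lemma mm_eq_zero_iff (a b : ℕ) : mm a b = 0 ↔ a = 0 ∧ b = 0 := by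
  constructor
  · intro h
    refine ⟨?_, ?_⟩
    · have := congrArg (fun d : Fin 2 →₀ ℕ => d 0) h; simpa [mm_apply0] using this
    · have := congrArg (fun d : Fin 2 →₀ ℕ => d 1) h; simpa [mm_apply1] using this
  · rintro ⟨rfl, rfl⟩; simp [mm]

lemma mm_zero : mm 0 0 = 0 := by simp [mm]

lemma mm_eq_single01 (a b : ℕ) : mm a b = Finsupp.single 0 1 ↔ a = 1 ∧ b = 0 := by
  constructor
  · intro h
    constructor
    · have := congrArg (fun d : Fin 2 →₀ ℕ => d 0) h
      simpa [mm_apply0, Finsupp.single_apply] using this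
    · have := congrArg (fun d : Fin 2 →₀ ℕ => d 1) h
      simpa [mm_apply1, Finsupp.single_apply] using this
  · rintro ⟨rfl, rfl⟩; simp [mm]

variable {R : Type*} [CommRing R]

lemma ps_coeff (n : ℕ) (f : PowerSeries R) :
    PowerSeries.coeff n f = MvPowerSeries.coeff (Finsupp.single () n) f := rfl

lemma coeff_mm_one (a b : ℕ) :
    MvPowerSeries.coeff (mm a b) (1 : MvPowerSeries (Fin 2) R) = if a = 0 ∧ b = 0 then 1 else 0 := by
  classical
  rw [MvPowerSeries.coeff_one]
  simp [mm_eq_zero_iff]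

lemma coeff_mm_X0 (a b : ℕ) :
    MvPowerSeries.coeff (mm a b) (MvPowerSeries.X 0 : MvPowerSeries (Fin 2) R) = if a = 1 ∧ b = 0 then 1 else 0 := by
  classical
  rw [MvPowerSeries.coeff_X]
  simp [mm_eq_single01]

/-! ### The series `X 0 - X 1` -/

/-- `X 0 - X 1`. -/
noncomputable def xy {R : Type*} [CommRing R] : MvPowerSeries (Fin 2) R :=
  MvPowerSeries.X 0 - MvPowerSeries.X 1

lemma mm_sub0 (a b : ℕ) (ha : 1 ≤ a) : mm a b - Finsupp.single 0 1 = mm (a - 1) b := by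
  ext i; fin_cases i <;> simp [mm, Finsupp.single_apply]

lemma mm_sub1 (a b : ℕ) (hb : 1 ≤ b) : mm a b - Finsupp.single 1 1 = mm a (b - 1) := by
  ext i; fin_cases i <;> simp [mm, Finsupp.single_apply]

lemma coeff_X_mul' (s : Fin 2) (g : MvPowerSeries (Fin 2) R) (d : Fin 2 →₀ ℕ) :
    MvPowerSeries.coeff d (MvPowerSeries.X s * g) =
      if 1 ≤ d s then MvPowerSeries.coeff (d - Finsupp.single s 1) g else 0 := by
  rw [MvPowerSeries.X, MvPowerSeries.coeff_monomial_mul]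
  simp [Finsupp.single_le_iff]

lemma coeff_xy_mul (g : MvPowerSeries (Fin 2) R) (a b : ℕ) :
    MvPowerSeries.coeff (mm a b) (xy * g) =
      (if 1 ≤ a then MvPowerSeries.coeff (mm (a - 1) b) g else 0) -
      (if 1 ≤ b then MvPowerSeries.coeff (mm a (b - 1)) g else 0) := by
  rw [xy, sub_mul, map_sub, coeff_X_mul', coeff_X_mul', mm_apply0, mm_apply1]
  congr 1
  · split_ifs with h
    · rw [mm_sub0 a b h]
    · rfl
  · split_ifs with h
    · rw [mm_sub1 a b h]
    · rfl

lemma xy_nzd {g : MvPowerSeries (Fin 2) R} (h : xy * g = 0) : g = 0 := by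
  have key : ∀ b a, MvPowerSeries.coeff (mm a b) g = 0 := by
    intro b
    induction b with
    | zero =>
      intro a
      have h0 := congrArg (MvPowerSeries.coeff (mm (a + 1) 0)) h
      rw [coeff_xy_mul, map_zero] at h0
      simpa using h0
    | succ b ih =>
      intro a
      have h0 := congrArg (MvPowerSeries.coeff (mm (a + 1) (b + 1))) h
      rw [coeff_xy_mul, map_zero] at h0
      simpa [ih] using h0
  apply MvPowerSeries.ext
  intro d
  rw [(MvPowerSeries.coeff d).map_zero, eq_mm d]
  exact key _ _

/-- Quotient of `g` by `X 0 - X 1` (valid when the antidiagonal sums of `g` vanish). -/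
noncomputable def quot (g : MvPowerSeries (Fin 2) R) : MvPowerSeries (Fin 2) R :=
  fun d => ∑ k ∈ Finset.range (d 1 + 1),
    MvPowerSeries.coeff (mm (d 0 + 1 + k) (d 1 - k)) g

lemma coeff_quot (g : MvPowerSeries (Fin 2) R) (a b : ℕ) :
    MvPowerSeries.coeff (mm a b) (quot g) =
      ∑ k ∈ Finset.range (b + 1), MvPowerSeries.coeff (mm (a + 1 + k) (b - k)) g := by
  rw [MvPowerSeries.coeff_apply, quot]
  simp only [mm_apply0, mm_apply1]

lemma xy_dvd {g : MvPowerSeries (Fin 2) R}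
    (hg : ∀ n, ∑ p ∈ Finset.HasAntidiagonal.antidiagonal n, MvPowerSeries.coeff (mm p.1 p.2) g = 0) :
    ∃ h, g = xy * h := by
  classical
  refine ⟨quot g, ?_⟩
  have hco := coeff_quot g
  have hgr : ∀ n : ℕ, ∑ k ∈ Finset.range (n + 1),
      MvPowerSeries.coeff (mm k (n - k)) g = 0 := by
    intro n
    have := hg n
    rwa [Finset.Nat.sum_antidiagonal_eq_sum_range_succ_mk] at this
  suffices hsuf : ∀ a b : ℕ, MvPowerSeries.coeff (mm a b) g =
      MvPowerSeries.coeff (mm a b) (xy * quot g) by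
    apply MvPowerSeries.ext
    intro d
    rw [eq_mm d]
    exact hsuf _ _
  intro a b
  rw [coeff_xy_mul]
  rcases Nat.eq_zero_or_pos a with ha | ha
  · rcases Nat.eq_zero_or_pos b with hb | hb
    · rw [ha, hb]
      have h0 := hgr 0
      rw [Finset.sum_range_one] at h0
      simpa using h0
    · rw [ha]
      rw [if_neg (by omega), if_pos (show 1 ≤ b by omega), hco]
      have e0 : b - 1 + 1 = b := by omega
      rw [e0]
      have h0 := hgr b
      rw [Finset.sum_range_succ' (fun k => MvPowerSeries.coeff (mm k (b - k)) g)] at h0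
      have hrw : ∀ k ∈ Finset.range b,
          MvPowerSeries.coeff (mm (0 + 1 + k) (b - 1 - k)) g =
          MvPowerSeries.coeff (mm (k + 1) (b - (k + 1))) g := by
        intro k _
        have h1 : 0 + 1 + k = k + 1 := by omega
        have h2 : b - 1 - k = b - (k + 1) := by omega
        rw [h1, h2]
      rw [Finset.sum_congr rfl hrw]
      simp only [Nat.sub_zero] at h0
      linear_combination h0
  · rcases Nat.eq_zero_or_pos b with hb | hb
    · rw [hb]
      rw [if_pos (show 1 ≤ a by omega), if_neg (by omega), hco, Finset.sum_range_one]
      have : a - 1 + 1 + 0 = a := by omega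
      rw [this]
      simp
    · rw [if_pos (show 1 ≤ a by omega), if_pos (show 1 ≤ b by omega), hco, hco]
      rw [Finset.sum_range_succ'
        (fun k => MvPowerSeries.coeff (mm (a - 1 + 1 + k) (b - k)) g)]
      have e1 : ∀ k ∈ Finset.range b,
          MvPowerSeries.coeff (mm (a - 1 + 1 + (k + 1)) (b - (k + 1))) g =
          MvPowerSeries.coeff (mm (a + 1 + k) (b - 1 - k)) g := by
        intro k _
        have h1 : a - 1 + 1 + (k + 1) = a + 1 + k := by omega
        have h2 : b - (k + 1) = b - 1 - k := by omega
        rw [h1, h2]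
      rw [Finset.sum_congr rfl e1]
      have e2 : a - 1 + 1 + 0 = a := by omega
      have e3 : b - 0 = b := by omega
      rw [e2, e3]
      have e4 : b - 1 + 1 = b := by omega
      rw [e4]
      ring

/-! ### The swap -/

/-- The swap on exponents, as an `AddEquiv`. -/
noncomputable def es : (Fin 2 →₀ ℕ) ≃+ (Fin 2 →₀ ℕ) := Finsupp.domCongr (Equiv.swap 0 1)

lemma swap_coeff (f : MvPowerSeries (Fin 2) R) (d : Fin 2 →₀ ℕ) :
    MvPowerSeries.coeff d (swapPS f) = MvPowerSeries.coeff (es d) f := rfl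

lemma es_single (i : Fin 2) (n : ℕ) :
    es (Finsupp.single i n) = Finsupp.single (Equiv.swap 0 1 i) n := by
  rw [es, Finsupp.domCongr_apply, Finsupp.equivMapDomain_single]

lemma es_mm (a b : ℕ) : es (mm a b) = mm b a := by
  rw [mm, map_add, es_single, es_single, Equiv.swap_apply_left, Equiv.swap_apply_right,
    mm, add_comm]

lemma es_es (d : Fin 2 →₀ ℕ) : es (es d) = d := by
  conv_lhs => rw [eq_mm d, es_mm, es_mm]
  exact (eq_mm d).symm

lemma swap_swap (f : MvPowerSeries (Fin 2) R) : swapPS (swapPS f) = f := by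
  apply MvPowerSeries.ext
  intro d
  rw [swap_coeff, swap_coeff, es_es]

lemma swap_sub (f g : MvPowerSeries (Fin 2) R) :
    swapPS (f - g) = swapPS f - swapPS g := rfl

lemma swap_mul (f g : MvPowerSeries (Fin 2) R) :
    swapPS (f * g) = swapPS f * swapPS g := by
  classical
  apply MvPowerSeries.ext
  intro d
  rw [swap_coeff, MvPowerSeries.coeff_mul, MvPowerSeries.coeff_mul]
  refine Finset.sum_nbij' (fun p => (es p.1, es p.2)) (fun p => (es p.1, es p.2))
    ?_ ?_ ?_ ?_ ?_
  · intro p hp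
    rw [Finset.HasAntidiagonal.mem_antidiagonal] at hp ⊢
    rw [← map_add es, hp, es_es]
  · intro p hp
    rw [Finset.HasAntidiagonal.mem_antidiagonal] at hp ⊢
    rw [← map_add es, hp]
  · intro p _; simp [es_es]
  · intro p _; simp [es_es]
  · intro p _
    rw [swap_coeff, swap_coeff, es_es, es_es]

lemma swap_X0 : swapPS (MvPowerSeries.X 0 : MvPowerSeries (Fin 2) R) = MvPowerSeries.X 1 := by
  classical
  apply MvPowerSeries.ext
  intro d
  rw [swap_coeff, MvPowerSeries.coeff_X, MvPowerSeries.coeff_X]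
  refine if_congr ?_ rfl rfl
  constructor
  · intro h
    have h2 := congrArg es h
    rw [es_es] at h2
    rw [h2]
    have h1 : (Finsupp.single 0 1 : Fin 2 →₀ ℕ) = mm 1 0 := by rw [mm]; simp
    rw [h1, es_mm, mm]
    simp
  · intro h
    have h2 := congrArg es (congrArg es h)
    rw [es_es, es_es] at h2
    rw [h2]
    have h1 : (Finsupp.single 1 1 : Fin 2 →₀ ℕ) = mm 0 1 := by rw [mm]; simp
    rw [h1, es_mm, mm]
    simp

lemma swap_X1 : swapPS (MvPowerSeries.X 1 : MvPowerSeries (Fin 2) R) = MvPowerSeries.X 0 := by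
  have h := congrArg swapPS (swap_X0 (R := R))
  rw [swap_swap] at h
  exact h.symm

lemma swap_xy : swapPS (xy : MvPowerSeries (Fin 2) R) = -xy := by
  rw [xy, swap_sub, swap_X0, swap_X1]
  ring

lemma swap_coeff_zero (f : MvPowerSeries (Fin 2) R) :
    MvPowerSeries.coeff 0 (swapPS f) = MvPowerSeries.coeff 0 f := by
  rw [swap_coeff, map_zero]

/-! ### The diagonal -/

/-- Sum of coefficients along the antidiagonal: restriction to the diagonal. -/
noncomputable def diag (g : MvPowerSeries (Fin 2) R) : PowerSeries R :=
  PowerSeries.mk fun n => ∑ p ∈ Finset.HasAntidiagonal.antidiagonal n, MvPowerSeries.coeff (mm p.1 p.2) g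

lemma diag_coeff (g : MvPowerSeries (Fin 2) R) (n : ℕ) :
    PowerSeries.coeff n (diag g) =
      ∑ p ∈ Finset.HasAntidiagonal.antidiagonal n, MvPowerSeries.coeff (mm p.1 p.2) g :=
  PowerSeries.coeff_mk _ _

lemma diag_one : diag (1 : MvPowerSeries (Fin 2) R) = 1 := by
  classical
  ext n
  rw [diag_coeff, PowerSeries.coeff_one]
  have h1 : ∀ p ∈ Finset.HasAntidiagonal.antidiagonal n,
      MvPowerSeries.coeff (mm p.1 p.2) (1 : MvPowerSeries (Fin 2) R) =
      if p = ((0 : ℕ), (0 : ℕ)) then 1 else 0 := by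
    intro p _
    rw [MvPowerSeries.coeff_one]
    refine if_congr ?_ rfl rfl
    rw [mm_eq_zero_iff]
    constructor
    · rintro ⟨h1, h2⟩; exact Prod.ext h1 h2
    · rintro rfl; exact ⟨rfl, rfl⟩
  rw [Finset.sum_congr rfl h1, Finset.sum_ite_eq' _ ((0 : ℕ), (0 : ℕ)) (fun _ => (1 : R))]
  simp [Finset.HasAntidiagonal.mem_antidiagonal, eq_comm]

lemma diag_mul (f g : MvPowerSeries (Fin 2) R) : diag (f * g) = diag f * diag g := by
  classical
  ext n
  rw [PowerSeries.coeff_mul, diag_coeff]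
  have h1 : ∀ p ∈ Finset.HasAntidiagonal.antidiagonal n,
      MvPowerSeries.coeff (mm p.1 p.2) (f * g) =
      ∑ q ∈ Finset.HasAntidiagonal.antidiagonal (mm p.1 p.2),
        MvPowerSeries.coeff q.1 f * MvPowerSeries.coeff q.2 g := by
    intro p _
    rw [MvPowerSeries.coeff_mul]
  rw [Finset.sum_congr rfl h1]
  have h2 : ∀ p ∈ Finset.HasAntidiagonal.antidiagonal n,
      PowerSeries.coeff p.1 (diag f) * PowerSeries.coeff p.2 (diag g) =
      ∑ q ∈ Finset.HasAntidiagonal.antidiagonal p.1 ×ˢ Finset.HasAntidiagonal.antidiagonal p.2,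
        MvPowerSeries.coeff (mm q.1.1 q.1.2) f * MvPowerSeries.coeff (mm q.2.1 q.2.2) g := by
    intro p _
    rw [diag_coeff, diag_coeff, Finset.sum_mul_sum]
    rw [Finset.sum_product]
  rw [Finset.sum_congr rfl h2, Finset.sum_sigma', Finset.sum_sigma']
  refine Finset.sum_nbij'
    (fun x => ⟨(x.2.1 0 + x.2.1 1, x.2.2 0 + x.2.2 1),
      ((x.2.1 0, x.2.1 1), (x.2.2 0, x.2.2 1))⟩)
    (fun x => ⟨(x.2.1.1 + x.2.2.1, x.2.1.2 + x.2.2.2), (mm x.2.1.1 x.2.1.2, mm x.2.2.1 x.2.2.2)⟩)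
    ?_ ?_ ?_ ?_ ?_
  · rintro ⟨⟨a, b⟩, ⟨d1, d2⟩⟩ hx
    simp only [Finset.mem_sigma, Finset.HasAntidiagonal.mem_antidiagonal] at hx
    obtain ⟨hab, hd⟩ := hx
    simp only [Finset.mem_sigma, Finset.HasAntidiagonal.mem_antidiagonal, Finset.mem_product]
    have h0 := congrArg (fun d : Fin 2 →₀ ℕ => d 0) hd
    have h1 := congrArg (fun d : Fin 2 →₀ ℕ => d 1) hd
    simp only [Finsupp.add_apply, mm_apply0, mm_apply1] at h0 h1
    exact ⟨by omega, trivial, trivial⟩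
  · rintro ⟨⟨u, v⟩, ⟨⟨a1, b1⟩, ⟨a2, b2⟩⟩⟩ hx
    simp only [Finset.mem_sigma, Finset.HasAntidiagonal.mem_antidiagonal, Finset.mem_product] at hx
    obtain ⟨huv, h1, h2⟩ := hx
    simp only [Finset.mem_sigma, Finset.HasAntidiagonal.mem_antidiagonal]
    constructor
    · omega
    · rw [mm_add]
  · rintro ⟨⟨a, b⟩, ⟨d1, d2⟩⟩ hx
    simp only [Finset.mem_sigma, Finset.HasAntidiagonal.mem_antidiagonal] at hx
    obtain ⟨hab, hd⟩ := hx
    have h0 := congrArg (fun d : Fin 2 →₀ ℕ => d 0) hd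
    have h1 := congrArg (fun d : Fin 2 →₀ ℕ => d 1) hd
    simp only [Finsupp.add_apply, mm_apply0, mm_apply1] at h0 h1
    refine Sigma.ext ?_ ?_
    · simp only; exact Prod.ext h0 h1
    · simp only
      refine heq_of_eq ?_
      refine Prod.ext ?_ ?_
      · exact (eq_mm d1).symm
      · exact (eq_mm d2).symm
  · rintro ⟨⟨u, v⟩, ⟨⟨a1, b1⟩, ⟨a2, b2⟩⟩⟩ hx
    simp only [Finset.mem_sigma, Finset.HasAntidiagonal.mem_antidiagonal, Finset.mem_product] at hx
    refine Sigma.ext ?_ ?_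
    · simp only [mm_apply0, mm_apply1]
      refine Prod.ext ?_ ?_ <;> simp [mm_apply0, mm_apply1] <;> omega
    · simp only [mm_apply0, mm_apply1]
      exact heq_of_eq rfl
  · rintro ⟨⟨a, b⟩, ⟨d1, d2⟩⟩ hx
    simp only
    rw [← eq_mm d1, ← eq_mm d2]

lemma diag_pow (f : MvPowerSeries (Fin 2) R) (i : ℕ) : diag (f ^ i) = diag f ^ i := by
  induction i with
  | zero => simpa using diag_one
  | succ i ih => rw [pow_succ, pow_succ, diag_mul, ih]

lemma coeff_substPS {σ : Type*} (F : MvPowerSeries (Fin 2) R) (p q : MvPowerSeries σ R)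
    (d : σ →₀ ℕ) :
    MvPowerSeries.coeff d (substPS F p q) =
      ∑ i ∈ Finset.range ((d.sum fun _ k => k) + 1),
        ∑ j ∈ Finset.range ((d.sum fun _ k => k) + 1),
          MvPowerSeries.coeff (mm i j) F * MvPowerSeries.coeff d (p ^ i * q ^ j) := rfl

lemma diag_substPS (F : MvPowerSeries (Fin 2) R) (p q : MvPowerSeries (Fin 2) R) :
    diag (substPS F p q) = substPS F (diag p) (diag q) := by
  classical
  apply PowerSeries.ext
  intro n
  rw [diag_coeff]
  have hL : ∀ ab ∈ Finset.HasAntidiagonal.antidiagonal n,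
      MvPowerSeries.coeff (mm ab.1 ab.2) (substPS F p q) =
      ∑ i ∈ Finset.range (n + 1), ∑ j ∈ Finset.range (n + 1),
        MvPowerSeries.coeff (mm i j) F *
          MvPowerSeries.coeff (mm ab.1 ab.2) (p ^ i * q ^ j) := by
    intro ab hab
    rw [Finset.HasAntidiagonal.mem_antidiagonal] at hab
    rw [coeff_substPS, mm_sum, hab]
  rw [Finset.sum_congr rfl hL]
  have hR : PowerSeries.coeff n (substPS F (diag p) (diag q)) =
      ∑ i ∈ Finset.range (n + 1), ∑ j ∈ Finset.range (n + 1),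
        MvPowerSeries.coeff (mm i j) F *
          (∑ ab ∈ Finset.HasAntidiagonal.antidiagonal n,
            MvPowerSeries.coeff (mm ab.1 ab.2) (p ^ i * q ^ j)) := by
    rw [ps_coeff, coeff_substPS, single_unit_sum]
    refine Finset.sum_congr rfl fun i _ => Finset.sum_congr rfl fun j _ => ?_
    congr 1
    rw [← ps_coeff, ← diag_coeff, ← diag_pow, ← diag_pow, ← diag_mul]
  rw [hR]
  rw [Finset.sum_comm]
  refine Finset.sum_congr rfl fun i _ => ?_
  rw [Finset.sum_comm]
  refine Finset.sum_congr rfl fun j _ => ?_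
  rw [Finset.mul_sum]

lemma diag_X0 : diag (MvPowerSeries.X 0 : MvPowerSeries (Fin 2) R) = PowerSeries.X := by
  classical
  ext n
  rw [diag_coeff, PowerSeries.coeff_X]
  have h1 : ∀ p ∈ Finset.HasAntidiagonal.antidiagonal n,
      MvPowerSeries.coeff (mm p.1 p.2) (MvPowerSeries.X 0 : MvPowerSeries (Fin 2) R) =
      if p = ((1 : ℕ), (0 : ℕ)) then 1 else 0 := by
    intro p _
    rw [MvPowerSeries.coeff_X]
    refine if_congr ?_ rfl rfl
    constructor
    · intro h
      have h0 := congrArg (fun d : Fin 2 →₀ ℕ => d 0) h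
      have h1' := congrArg (fun d : Fin 2 →₀ ℕ => d 1) h
      simp [mm_apply0, mm_apply1, Finsupp.single_apply] at h0 h1'
      exact Prod.ext (by omega) (by omega)
    · rintro rfl
      rw [← mm_def]
      simp [mm]
  rw [Finset.sum_congr rfl h1, Finset.sum_ite_eq' _ ((1 : ℕ), (0 : ℕ)) (fun _ => (1 : R))]
  simp [Finset.HasAntidiagonal.mem_antidiagonal, eq_comm]

lemma coeff_mm_toSecond (χ : PowerSeries R) (a b : ℕ) :
    MvPowerSeries.coeff (mm a b) (toSecond χ) =
      if a = 0 then PowerSeries.coeff b χ else 0 := by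
  rw [MvPowerSeries.coeff_apply, toSecond, mm_apply1]
  refine if_congr ?_ rfl rfl
  constructor
  · intro h
    have h0 := congrArg (fun d : Fin 2 →₀ ℕ => d 0) h
    simpa [mm_apply0, Finsupp.single_apply] using h0
  · rintro rfl
    ext i
    fin_cases i
    · simp [mm_apply0, Finsupp.single_apply]
    · simp [mm_apply1, Finsupp.single_apply]

lemma diag_toSecond (χ : PowerSeries R) : diag (toSecond χ) = χ := by
  classical
  ext n
  rw [diag_coeff]
  have h1 : ∀ p ∈ Finset.HasAntidiagonal.antidiagonal n,
      MvPowerSeries.coeff (mm p.1 p.2) (toSecond χ) =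
      if p = ((0 : ℕ), n) then PowerSeries.coeff n χ else 0 := by
    intro p hp
    rw [Finset.HasAntidiagonal.mem_antidiagonal] at hp
    rw [coeff_mm_toSecond]
    by_cases h : p.1 = 0
    · have : p = ((0 : ℕ), n) := Prod.ext h (by omega)
      rw [if_pos h, if_pos this, this]
    · rw [if_neg h, if_neg (by rintro rfl; exact h rfl)]
  rw [Finset.sum_congr rfl h1,
    Finset.sum_ite_eq' _ ((0 : ℕ), n) (fun _ => PowerSeries.coeff n χ)]
  simp [Finset.HasAntidiagonal.mem_antidiagonal]

lemma coeff_substPS_ps (F : MvPowerSeries (Fin 2) R) (p q : PowerSeries R) (n : ℕ) :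
    PowerSeries.coeff n (substPS F p q) =
      ∑ i ∈ Finset.range (n + 1), ∑ j ∈ Finset.range (n + 1),
        MvPowerSeries.coeff (mm i j) F * PowerSeries.coeff n (p ^ i * q ^ j) := by
  rw [ps_coeff, coeff_substPS, single_unit_sum]
  rfl

lemma F10 (G : FormalGroupLaw R) : MvPowerSeries.coeff (mm 1 0) G.F = 1 := by
  have h := congrArg (PowerSeries.coeff 1) G.F_x_zero
  rw [coeff_substPS_ps, PowerSeries.coeff_one_X] at h
  rw [show (1 : ℕ) + 1 = 2 from rfl] at h
  rw [Finset.sum_range_succ, Finset.sum_range_one] at h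
  rw [Finset.sum_range_succ, Finset.sum_range_one] at h
  rw [Finset.sum_range_succ, Finset.sum_range_one] at h
  simpa [PowerSeries.coeff_one, PowerSeries.coeff_one_X] using h

lemma coeff_D1 (G : FormalGroupLaw R) (χ : PowerSeries R)
    (hχ0 : PowerSeries.constantCoeff χ = 0) :
    MvPowerSeries.coeff (mm 1 0)
      (substPS G.F (MvPowerSeries.X 0) (toSecond χ)) = 1 := by
  rw [coeff_substPS, mm_sum]
  rw [show (1 : ℕ) + 0 + 1 = 2 from rfl]
  rw [Finset.sum_range_succ, Finset.sum_range_one]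
  rw [Finset.sum_range_succ, Finset.sum_range_one]
  rw [Finset.sum_range_succ, Finset.sum_range_one]
  have e00 : MvPowerSeries.coeff (mm 1 0)
      ((MvPowerSeries.X 0 : MvPowerSeries (Fin 2) R) ^ 0 * toSecond χ ^ 0) = 0 := by
    rw [pow_zero, pow_zero, mul_one, coeff_mm_one]
    simp
  have e01 : MvPowerSeries.coeff (mm 1 0)
      ((MvPowerSeries.X 0 : MvPowerSeries (Fin 2) R) ^ 0 * toSecond χ ^ 1) = 0 := by
    rw [pow_zero, pow_one, one_mul, coeff_mm_toSecond]
    simp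
  have e10 : MvPowerSeries.coeff (mm 1 0)
      ((MvPowerSeries.X 0 : MvPowerSeries (Fin 2) R) ^ 1 * toSecond χ ^ 0) = 1 := by
    rw [pow_one, pow_zero, mul_one, coeff_mm_X0]
    simp
  have e11 : MvPowerSeries.coeff (mm 1 0)
      ((MvPowerSeries.X 0 : MvPowerSeries (Fin 2) R) ^ 1 * toSecond χ ^ 1) = 0 := by
    rw [pow_one, pow_one, coeff_X_mul']
    rw [if_pos (by rw [mm_apply0])]
    rw [mm_sub0 1 0 le_rfl]
    rw [coeff_mm_toSecond]
    rw [if_pos rfl, PowerSeries.coeff_zero_eq_constantCoeff, hχ0]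
  rw [e00, e01, e10, e11, F10]
  ring

end OpA

open OpA in
/-- The operator A(f) = (1+σ)(f / F(y₁,χ(y₂))) is well defined: for every f there is a unique
power series h with h·F(y₁,χ(y₂))·F(y₂,χ(y₁)) = f·F(y₂,χ(y₁)) + σ(f)·F(y₁,χ(y₂));
moreover A(g·f) = g·A(f) for symmetric g. -/
theorem operator_A_well_defined {R : Type*} [CommRing R] (G : FormalGroupLaw R)
    (χ : PowerSeries R) (hχ0 : PowerSeries.constantCoeff χ = 0)
    (hχ : substPS G.F (PowerSeries.X : PowerSeries R) χ = 0) :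
    let D₁ : MvPowerSeries (Fin 2) R :=
      substPS G.F (MvPowerSeries.X 0 : MvPowerSeries (Fin 2) R) (toSecond χ)
    let D₂ : MvPowerSeries (Fin 2) R := swapPS D₁
    (∀ f : MvPowerSeries (Fin 2) R,
        ∃! h : MvPowerSeries (Fin 2) R, h * (D₁ * D₂) = f * D₂ + swapPS f * D₁) ∧
    (∀ g f h : MvPowerSeries (Fin 2) R, swapPS g = g →
        h * (D₁ * D₂) = f * D₂ + swapPS f * D₁ →
        (g * h) * (D₁ * D₂) = (g * f) * D₂ + swapPS (g * f) * D₁) := by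
  intro D₁ D₂
  classical
  -- D₁ vanishes on the diagonal
  have hD1diag : diag D₁ = 0 := by
    show diag (substPS G.F (MvPowerSeries.X 0) (toSecond χ)) = 0
    rw [diag_substPS, diag_X0, diag_toSecond, hχ]
  obtain ⟨V, hV⟩ := xy_dvd (g := D₁) (fun n => by
    have h := congrArg (PowerSeries.coeff n) hD1diag
    rw [diag_coeff] at h
    simpa using h)
  -- the quotient V is a unit
  have hD10 : MvPowerSeries.coeff (mm 1 0) D₁ = 1 := coeff_D1 G χ hχ0
  have hV0 : MvPowerSeries.coeff 0 V = 1 := by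
    have h := congrArg (MvPowerSeries.coeff (mm 1 0)) hV
    rw [hD10, coeff_xy_mul] at h
    rw [if_pos le_rfl, if_neg (by omega)] at h
    rw [show (1 : ℕ) - 1 = 0 from rfl, mm_zero] at h
    linear_combination -h
  have hVs0 : MvPowerSeries.coeff 0 (swapPS V) = 1 := by
    rw [swap_coeff_zero, hV0]
  have hUnit : IsUnit (V * swapPS V) := by
    rw [MvPowerSeries.isUnit_iff_constantCoeff]
    have : MvPowerSeries.constantCoeff (V * swapPS V) = 1 := by
      rw [map_mul, ← MvPowerSeries.coeff_zero_eq_constantCoeff, hV0, hVs0, mul_one]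
    rw [this]
    exact isUnit_one
  obtain ⟨u, hu⟩ := hUnit
  set W : MvPowerSeries (Fin 2) R := ↑u⁻¹ with hWdef
  have hW : V * swapPS V * W = 1 := by
    rw [← hu, hWdef]
    exact_mod_cast u.mul_inv
  -- D₂ in terms of V
  have hD2 : D₂ = -(xy * swapPS V) := by
    show swapPS D₁ = -(xy * swapPS V)
    rw [hV, swap_mul, swap_xy]
    ring
  constructor
  · intro f
    -- antisymmetric part is divisible by xy
    obtain ⟨k, hk⟩ := xy_dvd (g := swapPS (f * swapPS V) - f * swapPS V) (fun n => by
      have hterm : ∀ q ∈ Finset.HasAntidiagonal.antidiagonal n,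
          MvPowerSeries.coeff (mm q.1 q.2) (swapPS (f * swapPS V) - f * swapPS V) =
          MvPowerSeries.coeff (mm q.2 q.1) (f * swapPS V) -
            MvPowerSeries.coeff (mm q.1 q.2) (f * swapPS V) := by
        intro q _
        rw [map_sub, swap_coeff, es_mm]
      rw [Finset.sum_congr rfl hterm, Finset.sum_sub_distrib, sub_eq_zero]
      exact Finset.Nat.sum_antidiagonal_swap
        (f := fun q => MvPowerSeries.coeff (mm q.1 q.2) (f * swapPS V)))
    have hk' : swapPS f * V - f * swapPS V = xy * k := by
      rw [← hk, swap_mul, swap_swap]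
    have hmain : (-(k * W)) * (D₁ * D₂) = f * D₂ + swapPS f * D₁ := by
      rw [hV, hD2]
      linear_combination (-(xy : MvPowerSeries (Fin 2) R)) * hk' + (xy ^ 2 * k) * hW
    refine ⟨-(k * W), hmain, fun y hy => ?_⟩
    have hsub : (y - (-(k * W))) * (D₁ * D₂) = 0 := by
      rw [sub_mul, hy, hmain, sub_self]
    rw [hV, hD2] at hsub
    have h2 : xy * (xy * (y + k * W)) = 0 := by
      linear_combination (-W) * hsub - (xy ^ 2 * (y + k * W)) * hW
    have h4 := xy_nzd (xy_nzd h2)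
    linear_combination h4
  · intro g f h hg hEq
    have h1 : swapPS (g * f) = g * swapPS f := by rw [swap_mul, hg]
    rw [h1]
    calc g * h * (D₁ * D₂) = g * (h * (D₁ * D₂)) := by ring
    _ = g * (f * D₂ + swapPS f * D₁) := by rw [hEq]
    _ = g * f * D₂ + g * swapPS f * D₁ := by ring
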